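/- arXiv:2012.11141 — 6 statements merged into one kernel-verified Lean document; each statement's English description precedes it below -/
import Mathlib

section
/- Let a > 0 and let φ : ℝ → ℝ be a C² solution of the wormhole kink ODE such that φ'(r) → 0 and sin(φ(r)) → 0 as r → +∞. Then the energy balance identity holds: (1/2)·φ'(0)² − sin²(φ(0)) = ∫_0^∞ (2r/(r²+a²))·φ'(r)² dr, and in particular the integral on the right-hand side converges. -/
open Real Filter MeasureTheory

/-- Energy balance identity: for a `C²` solution of the wormhole kink ODE with `φ' → 0` and
`sin(φ) → 0` as `r → +∞`, one has
`(1/2)·φ'(0)² − sin²(φ(0)) = ∫_0^∞ (2r/(r²+a²))·φ'(r)² dr`, the integral being convergent. -/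
theorem energy_balance (a : ℝ) (ha : 0 < a) (φ : ℝ → ℝ)
    (hφ : ContDiff ℝ 2 φ)
    (hφeq : ∀ r : ℝ, deriv (deriv φ) r + (2 * r / (r ^ 2 + a ^ 2)) * deriv φ r
        = Real.sin (2 * φ r))
    (hd : Tendsto (deriv φ) atTop (nhds 0))
    (hs : Tendsto (fun r => Real.sin (φ r)) atTop (nhds 0)) :
    IntegrableOn (fun r => (2 * r / (r ^ 2 + a ^ 2)) * (deriv φ r) ^ 2) (Set.Ioi 0) ∧
    (1/2) * (deriv φ 0) ^ 2 - Real.sin (φ 0) ^ 2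
      = ∫ r in Set.Ioi (0 : ℝ), (2 * r / (r ^ 2 + a ^ 2)) * (deriv φ r) ^ 2 := by
  set F : ℝ → ℝ := fun r => Real.sin (φ r) ^ 2 - (1/2) * (deriv φ r) ^ 2 with hF
  set g : ℝ → ℝ := fun r => (2 * r / (r ^ 2 + a ^ 2)) * (deriv φ r) ^ 2 with hg
  have hφ1 : Differentiable ℝ φ := hφ.differentiable (by norm_num)
  have hφ'1 : Differentiable ℝ (deriv φ) := by
    have := (contDiff_succ_iff_deriv.mp (show ContDiff ℝ (1+1) φ from hφ)).2
    exact this.2.differentiable (by norm_num)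
  have hFd : ∀ x : ℝ, HasDerivAt F (g x) x := by
    intro x
    have h1 : HasDerivAt φ (deriv φ x) x := (hφ1 x).hasDerivAt
    have h2 : HasDerivAt (deriv φ) (deriv (deriv φ) x) x := (hφ'1 x).hasDerivAt
    have hsin : HasDerivAt (fun r => Real.sin (φ r) ^ 2)
        (2 * Real.sin (φ x) * (Real.cos (φ x) * deriv φ x)) x := by
      have := ((Real.hasDerivAt_sin (φ x)).comp x h1)
      simpa [mul_comm, mul_assoc] using (this.fun_pow 2)
    have hsq : HasDerivAt (fun r => (1/2 : ℝ) * (deriv φ r) ^ 2)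
        ((1/2) * (2 * deriv φ x * deriv (deriv φ) x)) x := by
      simpa [mul_comm, mul_assoc] using ((h2.pow 2).const_mul (1/2 : ℝ))
    have := hsin.sub hsq
    refine this.congr_deriv ?_
    have heq := hφeq x
    have hsin2 : Real.sin (2 * φ x) = 2 * Real.sin (φ x) * Real.cos (φ x) := by
      rw [Real.sin_two_mul]
    have : deriv (deriv φ) x = Real.sin (2 * φ x) - (2 * x / (x ^ 2 + a ^ 2)) * deriv φ x := by
      linarith
    rw [this, hsin2]
    ring
  have hgpos : ∀ x ∈ Set.Ioi (0:ℝ), 0 ≤ g x := by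
    intro x hx
    have hx0 : (0:ℝ) < x := hx
    have hden : 0 < x ^ 2 + a ^ 2 := by positivity
    have : 0 ≤ 2 * x / (x ^ 2 + a ^ 2) := by positivity
    exact mul_nonneg this (sq_nonneg _)
  have hFtop : Tendsto F atTop (nhds 0) := by
    have h1 : Tendsto (fun r => Real.sin (φ r) ^ 2) atTop (nhds 0) := by
      simpa [sq] using (hs.mul hs)
    have h2 : Tendsto (fun r => (1/2 : ℝ) * (deriv φ r) ^ 2) atTop (nhds 0) := by
      have := (hd.mul hd).const_mul (1/2 : ℝ)
      simpa [pow_two] using this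
    rw [hF]; simpa using h1.sub h2
  have hderiv : ∀ x ∈ Set.Ici (0:ℝ), HasDerivAt F (g x) x := fun x _ => hFd x
  constructor
  · exact integrableOn_Ioi_deriv_of_nonneg' hderiv hgpos hFtop
  · have := integral_Ioi_of_hasDerivAt_of_nonneg' hderiv hgpos hFtop
    rw [this]
    simp [hF]
end

section
/- Let a > 0 and let φ : ℝ → ℝ be the C² solution of the wormhole kink ODE with initial data φ(0) = π/2 and φ'(0) = b, where 0 < b < √2. Then φ(r) < π for all r ≥ 0 (the fictitious particle never reaches the hilltop). -/
open Real Filter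

/-- If `φ` solves the wormhole kink ODE with `φ(0) = π/2` and `φ'(0) = b`, `0 < b < √2`,
then `φ(r) < π` for all `r ≥ 0`: the fictitious particle never reaches the hilltop. -/
theorem never_reaches_hilltop (a : ℝ) (ha : 0 < a) (b : ℝ) (hb0 : 0 < b)
    (hb : b < Real.sqrt 2) (φ : ℝ → ℝ)
    (hφ : ContDiff ℝ 2 φ)
    (hφeq : ∀ r : ℝ, deriv (deriv φ) r + (2 * r / (r ^ 2 + a ^ 2)) * deriv φ r
        = Real.sin (2 * φ r))
    (h0 : φ 0 = Real.pi / 2) (h0' : deriv φ 0 = b) :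
    ∀ r : ℝ, 0 ≤ r → φ r < Real.pi := by
  -- differentiability facts
  have h2 : (2 : WithTop ℕ∞) = 1 + 1 := by norm_num
  obtain ⟨hφd, hφ1⟩ := (contDiff_succ_iff_deriv (n := 1)).mp (by simpa [h2] using hφ)
  have hφ'd : Differentiable ℝ (deriv φ) := hφ1.2.differentiable one_ne_zero
  -- energy
  set E : ℝ → ℝ := fun r => (1/2) * (deriv φ r)^2 - (Real.sin (φ r))^2 with hE
  have hder : ∀ r : ℝ, HasDerivAt E (-(2 * r / (r ^ 2 + a ^ 2)) * (deriv φ r)^2) r := by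
    intro r
    have hA : HasDerivAt (fun r => (1/2) * (deriv φ r)^2)
        ((1/2) * (2 * (deriv φ r)^1 * deriv (deriv φ) r)) r :=
      (((hφ'd r).hasDerivAt).pow 2).const_mul (1/2)
    have hB : HasDerivAt (fun r => (Real.sin (φ r))^2)
        (2 * (Real.sin (φ r))^1 * (Real.cos (φ r) * deriv φ r)) r :=
      (((hφd r).hasDerivAt).sin).pow 2
    have := hA.sub hB
    refine this.congr_deriv ?_
    have heq := hφeq r
    have hsin := Real.sin_two_mul (φ r)
    linear_combination (deriv φ r) * heq + (deriv φ r) * hsin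
  have hanti : AntitoneOn E (Set.Ici 0) := by
    apply antitoneOn_of_deriv_nonpos (convex_Ici 0)
    · exact fun x _ => ((hder x).continuousAt).continuousWithinAt
    · exact fun x _ => ((hder x).differentiableAt).differentiableWithinAt
    · intro x hx
      rw [interior_Ici] at hx
      rw [(hder x).deriv]
      have hx0 : (0:ℝ) < x := hx
      have hden : (0:ℝ) < x ^ 2 + a ^ 2 := by positivity
      have : 0 ≤ 2 * x / (x ^ 2 + a ^ 2) := by positivity
      nlinarith [sq_nonneg (deriv φ x)]
  intro r hr
  by_contra hcon
  push_neg at hcon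
  -- IVT: there is r₁ ∈ [0, r] with φ r₁ = π
  have hIVT : Real.pi ∈ φ '' Set.Icc 0 r := by
    apply intermediate_value_Icc hr (hφd.continuous.continuousOn)
    constructor
    · rw [h0]; linarith [Real.pi_pos]
    · exact hcon
  obtain ⟨r₁, hr₁mem, hr₁⟩ := hIVT
  have hE1 : E r₁ ≤ E 0 := hanti (Set.mem_Ici.mpr le_rfl) (Set.mem_Ici.mpr hr₁mem.1) hr₁mem.1
  have hE0 : E 0 = b^2/2 - 1 := by
    simp [hE, h0, h0', Real.sin_pi_div_two]
    ring
  have hEr : E r₁ = (1/2) * (deriv φ r₁)^2 := by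
    simp [hE, hr₁, Real.sin_pi]
  have hb2 : b^2 < 2 := by
    have : b < Real.sqrt 2 := hb
    nlinarith [Real.sq_sqrt (by norm_num : (0:ℝ) ≤ 2), Real.sqrt_nonneg 2]
  rw [hE0, hEr] at hE1
  nlinarith [sq_nonneg (deriv φ r₁)]
end

section
/- Let a > 0. There exists B > 0 such that for every b ≥ B, the C² solution φ : ℝ → ℝ of the wormhole kink ODE with initial data φ(0) = π/2 and φ'(0) = b satisfies φ(r) > π for some r > 0 (the fictitious particle rolls over the hilltop). -/
open Real Filter

/-- For large enough initial velocity `b`, the solution of the wormhole kink ODE with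
`φ(0) = π/2`, `φ'(0) = b` rolls over the hilltop: `φ(r) > π` for some `r > 0`. -/
theorem rolls_over_hilltop (a : ℝ) (ha : 0 < a) :
    ∃ B : ℝ, 0 < B ∧ ∀ b : ℝ, B ≤ b → ∀ φ : ℝ → ℝ,
      ContDiff ℝ 2 φ →
      (∀ r : ℝ, deriv (deriv φ) r + (2 * r / (r ^ 2 + a ^ 2)) * deriv φ r
          = Real.sin (2 * φ r)) →
      φ 0 = Real.pi / 2 → deriv φ 0 = b →
      ∃ r : ℝ, 0 < r ∧ Real.pi < φ r := by
  refine ⟨8 * a / 3 + 4 * Real.pi / a, by positivity, ?_⟩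
  intro b hb φ hφ hode hφ0 hφ'0
  have hπ : (0:ℝ) < Real.pi := Real.pi_pos
  have hb' : 8 * a / 3 ≤ b := by nlinarith [div_pos (by positivity : (0:ℝ) < 4 * Real.pi) ha]
  have hb0 : 0 < b := by nlinarith
  -- differentiability facts
  have hφd : Differentiable ℝ φ := hφ.differentiable (by norm_num)
  have hψc : ContDiff ℝ 1 (deriv φ) := by
    have h : ContDiff ℝ (1 + 1) φ := by norm_num; exact hφ
    exact (contDiff_succ_iff_deriv.mp h).2.2
  have hψd : Differentiable ℝ (deriv φ) := hψc.differentiable (by norm_num)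
  set ψ := deriv φ with hψdef
  -- key denominators
  have hden : ∀ r : ℝ, (0:ℝ) < r ^ 2 + a ^ 2 := fun r => by positivity
  -- H is monotone
  set H : ℝ → ℝ := fun r => (r ^ 2 + a ^ 2) * ψ r + r ^ 3 / 3 + a ^ 2 * r with hH
  have hHderiv : ∀ r : ℝ, HasDerivAt H ((r ^ 2 + a ^ 2) * (Real.sin (2 * φ r) + 1)) r := by
    intro r
    have h1 : HasDerivAt (fun x : ℝ => x ^ 2 + a ^ 2) (2 * r) r := by
      simpa using (hasDerivAt_pow 2 r).add_const (a ^ 2)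
    have h2 : HasDerivAt ψ (deriv ψ r) r := (hψd r).hasDerivAt
    have h3 : HasDerivAt (fun x : ℝ => x ^ 3 / 3) (r ^ 2) r := by
      have := (hasDerivAt_pow 3 r).div_const 3
      simpa using this.congr_deriv (by ring)
    have h4 : HasDerivAt (fun x : ℝ => a ^ 2 * x) (a ^ 2) r := by
      simpa using (hasDerivAt_id r).const_mul (a ^ 2)
    have h5 := ((h1.mul h2).add h3).add h4
    have hode' := hode r
    have hne : (r ^ 2 + a ^ 2) ≠ 0 := (hden r).ne'
    have : 2 * r * ψ r + (r ^ 2 + a ^ 2) * deriv ψ r + r ^ 2 + a ^ 2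
        = (r ^ 2 + a ^ 2) * (Real.sin (2 * φ r) + 1) := by
      have hd : deriv ψ r = Real.sin (2 * φ r) - 2 * r / (r ^ 2 + a ^ 2) * ψ r := by
        rw [hψdef]; linarith [hode r]
      rw [hd]; field_simp; ring
    rw [← this]
    exact h5
  have hHmono : Monotone H := by
    apply monotone_of_deriv_nonneg
    · exact fun r => (hHderiv r).differentiableAt
    · intro r
      rw [(hHderiv r).deriv]
      have := Real.neg_one_le_sin (2 * φ r)
      nlinarith [hden r]
  -- φ' ≥ b/4 on (0, a)
  have hψlb : ∀ x ∈ Set.Ioo (0:ℝ) a, b / 4 ≤ ψ x := by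
    intro x hx
    obtain ⟨hx0, hxa⟩ := hx
    have hmono := hHmono (le_of_lt hx0)
    have hH0 : H 0 = a ^ 2 * b := by
      show (0 ^ 2 + a ^ 2) * ψ 0 + 0 ^ 3 / 3 + a ^ 2 * 0 = a ^ 2 * b
      rw [hφ'0]; ring
    rw [hH0] at hmono
    have h1 : (x ^ 2 + a ^ 2) * ψ x ≥ a ^ 2 * b - x ^ 3 / 3 - a ^ 2 * x := by
      simp only [hH] at hmono; linarith
    have hxle : x ≤ a := le_of_lt hxa
    have h2 : (x ^ 2 + a ^ 2) * ψ x ≥ (b / 4) * (x ^ 2 + a ^ 2) := by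
      nlinarith [pow_le_pow_left₀ hx0.le hxle 3, pow_le_pow_left₀ hx0.le hxle 2,
        mul_le_mul_of_nonneg_left hxle (sq_nonneg a), sq_nonneg x, sq_nonneg a]
    have := hden x
    nlinarith
  -- φ grows on [0, a]
  have hG : MonotoneOn (fun r => φ r - b / 4 * r) (Set.Icc 0 a) := by
    apply monotoneOn_of_deriv_nonneg (convex_Icc 0 a)
    · exact (hφd.sub ((differentiable_id.const_mul (b / 4)))).continuous.continuousOn
    · exact ((hφd.sub ((differentiable_id.const_mul (b / 4)))).differentiableOn).mono
        interior_subset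
    · intro x hx
      rw [interior_Icc] at hx
      have hdx : deriv (fun r => φ r - b / 4 * r) x = ψ x - b / 4 := by
        have h1 : HasDerivAt (fun r : ℝ => φ r - b / 4 * r) (ψ x - b / 4) x := by
          exact ((hφd x).hasDerivAt.sub ((hasDerivAt_id x).const_mul (b / 4))).congr_deriv (by rw [mul_one])
        exact h1.deriv
      rw [hdx]
      linarith [hψlb x hx]
  have hkey := hG (Set.left_mem_Icc.mpr ha.le) (Set.right_mem_Icc.mpr ha.le) ha.le
  simp only [hφ0, mul_zero, sub_zero] at hkey
  refine ⟨a, ha, ?_⟩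
  have hab : a * b ≥ a * (8 * a / 3 + 4 * Real.pi / a) := by nlinarith
  have : a * (8 * a / 3 + 4 * Real.pi / a) = 8 * a ^ 2 / 3 + 4 * Real.pi := by
    field_simp
  nlinarith
end

section
/- For every compactly supported C¹ function v : ℝ → ℝ, the quadratic form of the linearized Sine-Gordon operator is nonnegative: ∫_{−∞}^{∞} ( v'(r)² + 2·v(r)² − (4/cosh²(√2·r))·v(r)² ) dr ≥ 0. -/
open Real Filter MeasureTheory Function

/-- The quadratic form of the linearized Sine-Gordon operator
`L = −d²/dr² + 2 − 4/cosh²(√2·r)` is nonnegative on compactly supported `C¹` functions. -/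
theorem quadratic_form_nonneg (v : ℝ → ℝ)
    (hv : ContDiff ℝ 1 v) (hsupp : HasCompactSupport v) :
    0 ≤ ∫ r : ℝ, ((deriv v r) ^ 2 + 2 * (v r) ^ 2
        - (4 / Real.cosh (Real.sqrt 2 * r) ^ 2) * (v r) ^ 2) := by
  have h2 : Real.sqrt 2 * Real.sqrt 2 = 2 := Real.mul_self_sqrt (by norm_num)
  set φ : ℝ → ℝ := fun r =>
    Real.sqrt 2 * (Real.sinh (Real.sqrt 2 * r) / Real.cosh (Real.sqrt 2 * r)) with hφdef
  have hc : ∀ r : ℝ, Real.cosh (Real.sqrt 2 * r) ≠ 0 := fun r => (Real.cosh_pos _).ne'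
  -- derivative of φ
  have hφd : ∀ r : ℝ, HasDerivAt φ (2 / Real.cosh (Real.sqrt 2 * r) ^ 2) r := by
    intro r
    have hm : HasDerivAt (fun r : ℝ => Real.sqrt 2 * r) (Real.sqrt 2) r := by
      simpa using (hasDerivAt_id r).const_mul (Real.sqrt 2)
    have hs : HasDerivAt (fun r : ℝ => Real.sinh (Real.sqrt 2 * r))
        (Real.cosh (Real.sqrt 2 * r) * Real.sqrt 2) r := (Real.hasDerivAt_sinh _).comp r hm
    have hcd : HasDerivAt (fun r : ℝ => Real.cosh (Real.sqrt 2 * r))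
        (Real.sinh (Real.sqrt 2 * r) * Real.sqrt 2) r := (Real.hasDerivAt_cosh _).comp r hm
    have h := ((hs.div hcd (hc r)).const_mul (Real.sqrt 2))
    refine HasDerivAt.congr_deriv h ?_
    have h1 : Real.cosh (Real.sqrt 2 * r) ^ 2 - Real.sinh (Real.sqrt 2 * r) ^ 2 = 1 :=
      Real.cosh_sq_sub_sinh_sq _
    field_simp
    nlinarith [h1, h2]
  have hφcont : Continuous φ := by
    apply continuous_const.mul
    exact ((Real.continuous_sinh.comp (continuous_const.mul continuous_id)).div
      (Real.continuous_cosh.comp (continuous_const.mul continuous_id)) hc)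
  have hvd : Differentiable ℝ v := hv.differentiable one_ne_zero
  have hv' : Continuous (deriv v) := hv.continuous_deriv le_rfl
  set g : ℝ → ℝ := fun r => φ r * v r ^ 2 with hgdef
  have hgd : ∀ r : ℝ, HasDerivAt g
      (2 / Real.cosh (Real.sqrt 2 * r) ^ 2 * v r ^ 2
        + φ r * (2 * v r ^ 1 * deriv v r)) r := by
    intro r
    exact (hφd r).mul ((hvd r).hasDerivAt.pow 2)
  have hgderiv : deriv g = fun r =>
      2 / Real.cosh (Real.sqrt 2 * r) ^ 2 * v r ^ 2 + φ r * (2 * v r ^ 1 * deriv v r) :=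
    funext fun r => (hgd r).deriv
  have hgsupp : HasCompactSupport g := by
    apply hsupp.mono'
    intro r hr
    by_contra hrt
    have hvr : v r = 0 := image_eq_zero_of_notMem_tsupport hrt
    simp only [mem_support, hgdef] at hr
    simp [hvr] at hr
  have hg'cont : Continuous (deriv g) := by
    rw [hgderiv]
    apply Continuous.add
    · exact (continuous_const.div
        ((Real.continuous_cosh.comp (continuous_const.mul continuous_id)).pow 2)
        (fun r => pow_ne_zero 2 (hc r))).mul ((hv.continuous).pow 2)
    · exact hφcont.mul ((continuous_const.mul ((hv.continuous).pow 1)).mul hv')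
  have hg'supp : HasCompactSupport (deriv g) := hgsupp.deriv
  -- ∫ deriv g = 0
  have hint_g : (∫ r : ℝ, deriv g r) = 0 := by
    obtain ⟨R, hR⟩ := (Metric.isBounded_iff_subset_closedBall 0).mp
      (hgsupp.isCompact.isBounded)
    have hRsub : tsupport g ⊆ Set.Icc (-R) R := by
      simpa [Real.closedBall_eq_Icc] using hR
    set R' : ℝ := |R| + 1 with hR'def
    have hsub : support (deriv g) ⊆ Set.Ioc (-R') R' := by
      intro x hx
      have := support_deriv_subset hx
      have := hRsub this
      constructor
      · have h3 : -R ≤ x := this.1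
        have := neg_abs_le R
        have := le_abs_self R
        simp only [hR'def, neg_add, Set.mem_Ioc]
        linarith
      · have h3 : x ≤ R := this.2
        have := le_abs_self R
        simp only [hR'def]
        linarith
    have hzero : ∀ x : ℝ, x ∉ Set.Icc (-R) R → g x = 0 := by
      intro x hx
      by_contra h
      exact hx (hRsub (subset_tsupport g (mem_support.mpr h)))
    have hgR' : g R' = 0 := by
      apply hzero
      intro hx
      have h3 := hx.2
      have := le_abs_self R
      simp only [hR'def] at h3
      linarith
    have hgmR' : g (-R') = 0 := by
      apply hzero
      intro hx
      have h3 := hx.1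
      have := le_abs_self R
      simp only [hR'def] at h3
      linarith
    calc (∫ r : ℝ, deriv g r) = ∫ r in (-R')..R', deriv g r :=
          (intervalIntegral.integral_eq_integral_of_support_subset hsub).symm
      _ = g R' - g (-R') := by
          apply intervalIntegral.integral_deriv_eq_sub
          · exact fun x _ => (hgd x).differentiableAt
          · exact hg'cont.intervalIntegrable _ _
      _ = 0 := by rw [hgR', hgmR']; ring
  -- pointwise identity
  have key : ∀ r : ℝ, (deriv v r) ^ 2 + 2 * (v r) ^ 2
      - (4 / Real.cosh (Real.sqrt 2 * r) ^ 2) * (v r) ^ 2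
      = (deriv v r + φ r * v r) ^ 2 - deriv g r := by
    intro r
    rw [hgderiv]
    have h1 : Real.cosh (Real.sqrt 2 * r) ^ 2 - Real.sinh (Real.sqrt 2 * r) ^ 2 = 1 :=
      Real.cosh_sq_sub_sinh_sq _
    simp only [hφdef]
    field_simp
    linear_combination (2 * v r ^ 2) * h1 + (- v r ^ 2 * Real.sinh (Real.sqrt 2 * r) ^ 2) * h2
  -- integrability
  have hsq_cont : Continuous (fun r => (deriv v r + φ r * v r) ^ 2) :=
    ((hv'.add (hφcont.mul hv.continuous))).pow 2
  have hsq_supp : HasCompactSupport (fun r => (deriv v r + φ r * v r) ^ 2) := by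
    apply hsupp.mono'
    intro r hr
    by_contra hrt
    have hvr : v r = 0 := image_eq_zero_of_notMem_tsupport hrt
    have hdv : deriv v r = 0 := by
      by_contra h
      exact hrt (support_deriv_subset (mem_support.mpr h))
    simp only [mem_support] at hr
    simp [hvr, hdv] at hr
  have hsq_int : Integrable (fun r => (deriv v r + φ r * v r) ^ 2) :=
    hsq_cont.integrable_of_hasCompactSupport hsq_supp
  have hg'_int : Integrable (deriv g) := hg'cont.integrable_of_hasCompactSupport hg'supp
  calc (0:ℝ) ≤ ∫ r : ℝ, (deriv v r + φ r * v r) ^ 2 :=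
        integral_nonneg fun r => sq_nonneg _
    _ = (∫ r : ℝ, (deriv v r + φ r * v r) ^ 2) - ∫ r : ℝ, deriv g r := by rw [hint_g]; ring
    _ = ∫ r : ℝ, ((deriv v r + φ r * v r) ^ 2 - deriv g r) :=
        (integral_sub hsq_int hg'_int).symm
    _ = ∫ r : ℝ, ((deriv v r) ^ 2 + 2 * (v r) ^ 2
        - (4 / Real.cosh (Real.sqrt 2 * r) ^ 2) * (v r) ^ 2) := by
        congr 1; funext r; exact (key r).symm
end

section
/- Let H(r) = 2·arctan(exp(√2·r)). There exists a unique C² function ψ : ℝ → ℝ that is odd (ψ(−r) = −ψ(r) for all r), satisfies ψ''(r) − 2·cos(2·H(r))·ψ(r) = −2·r·H'(r) for all r ∈ ℝ, and satisfies ψ(r) → 0 as r → ±∞. -/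
open Real Filter

open Topology

noncomputable section
namespace SG
def q : ℝ := Real.sqrt 2
lemma hq0 : 0 < q := Real.sqrt_pos.mpr (by norm_num)
lemma hq2 : q ^ 2 = 2 := Real.sq_sqrt (by norm_num)
def C (r : ℝ) : ℝ := Real.cosh (q * r)
def S (r : ℝ) : ℝ := Real.sinh (q * r)
lemma hC0 (r : ℝ) : C r ≠ 0 := (Real.cosh_pos _).ne'
lemma hCS (r : ℝ) : C r ^ 2 - S r ^ 2 = 1 := Real.cosh_sq_sub_sinh_sq _
lemma hasDerivAt_C (r : ℝ) : HasDerivAt C (q * S r) r := by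
  exact ((Real.hasDerivAt_cosh (q * r)).comp r
    ((hasDerivAt_id r).const_mul q)).congr_deriv (by simp [S, mul_comm])
lemma hasDerivAt_S (r : ℝ) : HasDerivAt S (q * C r) r := by
  exact ((Real.hasDerivAt_sinh (q * r)).comp r
    ((hasDerivAt_id r).const_mul q)).congr_deriv (by simp [C, mul_comm])
lemma contS : Continuous S := Real.continuous_sinh.comp (continuous_const.mul continuous_id)
lemma contC : Continuous C := Real.continuous_cosh.comp (continuous_const.mul continuous_id)

def II (r : ℝ) : ℝ := ∫ t in (0:ℝ)..r, t * S t / C t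
lemma contInteg : Continuous fun t => t * S t / C t :=
  (continuous_id.mul contS).div contC fun t => hC0 t
lemma hasDerivAt_II (r : ℝ) : HasDerivAt II (r * S r / C r) r :=
  (contInteg.integral_hasStrictDerivAt 0 r).hasDerivAt

def v1 (r : ℝ) : ℝ := 1 / C r
def v2 (r : ℝ) : ℝ := (q * r / C r + S r) / 2
def A (r : ℝ) : ℝ := Real.log (2 * C r) - q * r * S r / C r
def B (r : ℝ) : ℝ := II r - r ^ 2 * S r / C r
def dv1 (r : ℝ) : ℝ := -q * S r / C r ^ 2
def dv2 (r : ℝ) : ℝ := (q / C r - 2 * r * S r / C r ^ 2 + q * C r) / 2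
def ddv1 (r : ℝ) : ℝ := -2 * (C r ^ 2 - 2 * S r ^ 2) / C r ^ 3
def ddv2 (r : ℝ) : ℝ :=
  (-4 * S r / C r ^ 2 - 2 * q * r * (C r ^ 2 - 2 * S r ^ 2) / C r ^ 3 + 2 * S r) / 2

lemma hasDerivAt_v1 (r : ℝ) : HasDerivAt v1 (dv1 r) r := by
  have h := (hasDerivAt_C r).inv (hC0 r)
  have hv : v1 = fun y => (C y)⁻¹ := by funext y; simp [v1, one_div]
  rw [hv]
  refine h.congr_deriv (Eq.symm ?_)
  rw [dv1]
  ring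
lemma hasDerivAt_v2 (r : ℝ) : HasDerivAt v2 (dv2 r) r := by
  have h1 : HasDerivAt (fun r => q * r) q r := by
    simpa using (hasDerivAt_id r).const_mul q
  have := ((h1.div (hasDerivAt_C r) (hC0 r)).add (hasDerivAt_S r)).div_const 2
  refine this.congr_deriv (Eq.symm ?_)
  unfold dv2
  field_simp [hC0 r]
  linear_combination (r * S r) * hq2
lemma hasDerivAt_A (r : ℝ) : HasDerivAt A (-2 * r / C r ^ 2) r := by
  have h2C : (2 : ℝ) * C r ≠ 0 := by
    have : (0:ℝ) < 2 * C r := by have := Real.cosh_pos (q*r); simp [C]; linarith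
    exact this.ne'
  have hlog : HasDerivAt (fun r => Real.log (2 * C r)) ((2 * C r)⁻¹ * (2 * (q * S r))) r :=
    by have := (Real.hasDerivAt_log h2C).comp r ((hasDerivAt_C r).const_mul 2); exact this
  have hqr : HasDerivAt (fun r => q * r) q r := by
    simpa using (hasDerivAt_id r).const_mul q
  have h2 : HasDerivAt (fun r => q * r * S r / C r)
      (((q * S r + q * r * (q * C r)) * C r - q * r * S r * (q * S r)) / C r ^ 2) r :=
    (hqr.mul (hasDerivAt_S r)).div (hasDerivAt_C r) (hC0 r)
  have := hlog.sub h2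
  refine this.congr_deriv (Eq.symm ?_)
  field_simp [hC0 r]
  linear_combination (r * q ^ 2) * hCS r + r * hq2

lemma hasDerivAt_B (r : ℝ) : HasDerivAt B (-r * S r / C r - q * r ^ 2 / C r ^ 2) r := by
  have := (hasDerivAt_II r).sub
    (((hasDerivAt_pow 2 r).mul (hasDerivAt_S r)).div (hasDerivAt_C r) (hC0 r))
  refine this.congr_deriv (Eq.symm ?_)
  simp only [Pi.mul_apply]
  field_simp [hC0 r]
  norm_num
  linear_combination (r ^ 2 * q) * hCS r

def psi (r : ℝ) : ℝ := v2 r * A r - v1 r * B r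
def psi1 (r : ℝ) : ℝ := dv2 r * A r - dv1 r * B r
def psi2 (r : ℝ) : ℝ := ddv2 r * A r + dv2 r * (-2 * r / C r ^ 2)
  - ddv1 r * B r - dv1 r * (-r * S r / C r - q * r ^ 2 / C r ^ 2)

lemma hasDerivAt_psi (r : ℝ) : HasDerivAt psi (psi1 r) r := by
  have := ((hasDerivAt_v2 r).mul (hasDerivAt_A r)).sub
    ((hasDerivAt_v1 r).mul (hasDerivAt_B r))
  refine this.congr_deriv (Eq.symm ?_)
  unfold psi1 dv1 dv2 v1 v2
  field_simp [hC0 r]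
  ring

lemma hasDerivAt_dv1 (r : ℝ) : HasDerivAt dv1 (ddv1 r) r := by
  have := ((hasDerivAt_S r).const_mul (-q)).div ((hasDerivAt_C r).pow 2)
    (pow_ne_zero 2 (hC0 r))
  refine this.congr_deriv (Eq.symm ?_)
  unfold ddv1
  simp only [Pi.pow_apply]
  field_simp [hC0 r]
  norm_num
  linear_combination (C r ^ 3 - 2 * C r * S r ^ 2) * hq2

lemma hasDerivAt_dv2 (r : ℝ) : HasDerivAt dv2 (ddv2 r) r := by
  have := ((((hasDerivAt_const r q).div (hasDerivAt_C r) (hC0 r)).sub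
    ((((hasDerivAt_id r).const_mul 2).mul (hasDerivAt_S r)).div
      ((hasDerivAt_C r).pow 2) (pow_ne_zero 2 (hC0 r)))).add
    ((hasDerivAt_C r).const_mul q)).div_const 2
  refine this.congr_deriv (Eq.symm ?_)
  unfold ddv2
  simp only [Pi.pow_apply, Pi.mul_apply, id]
  field_simp [hC0 r]
  norm_num
  linear_combination (C r ^ 2 * S r - C r ^ 4 * S r) * hq2

lemma hasDerivAt_psi1 (r : ℝ) : HasDerivAt psi1 (psi2 r) r := by
  have := ((hasDerivAt_dv2 r).mul (hasDerivAt_A r)).sub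
    ((hasDerivAt_dv1 r).mul (hasDerivAt_B r))
  refine this.congr_deriv (Eq.symm ?_)
  unfold psi2
  ring

lemma hom1 (r : ℝ) : ddv1 r = 2 * (1 - 2 / C r ^ 2) * v1 r := by
  unfold ddv1 v1
  field_simp [hC0 r]
  linear_combination (-2) * hCS r

lemma hom2 (r : ℝ) : ddv2 r = 2 * (1 - 2 / C r ^ 2) * v2 r := by
  unfold ddv2 v2
  field_simp [hC0 r]
  linear_combination (-4 * q * r) * hCS r

lemma inho (r : ℝ) : dv2 r * (-2 * r / C r ^ 2)
    - dv1 r * (-r * S r / C r - q * r ^ 2 / C r ^ 2) = -2 * q * r / C r := by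
  unfold dv1 dv2
  field_simp [hC0 r]
  linear_combination (-r ^ 2 * S r) * hq2 + (q * r * C r) * hCS r

lemma wronsk (r : ℝ) : v1 r * dv2 r - dv1 r * v2 r = q := by
  unfold v1 v2 dv1 dv2
  field_simp [hC0 r]
  linear_combination (r * S r) * hq2 + (-q * C r) * hCS r

lemma ode (r : ℝ) : psi2 r - 2 * (1 - 2 / C r ^ 2) * psi r = -2 * q * r / C r := by
  unfold psi2 psi
  rw [hom1, hom2]
  linear_combination inho r

lemma hasDerivAt_H (r : ℝ) :
    HasDerivAt (fun r => 2 * Real.arctan (Real.exp (q * r))) (q / C r) r := by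
  have hq : HasDerivAt (fun y : ℝ => q * y) (q * 1) r := (hasDerivAt_id r).const_mul q
  have hx : HasDerivAt (fun r => Real.exp (q * r)) (Real.exp (q * r) * (q * 1)) r :=
    HasDerivAt.exp hq
  have := ((Real.hasDerivAt_arctan (Real.exp (q * r))).comp r hx).const_mul 2
  refine this.congr_deriv (Eq.symm ?_)
  have he : Real.exp (q * r) ≠ 0 := (Real.exp_pos _).ne'
  have h1 : (0:ℝ) < 1 + Real.exp (q * r) ^ 2 := by positivity
  rw [show C r = (Real.exp (q * r) + Real.exp (-(q * r))) / 2 from Real.cosh_eq _,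
    Real.exp_neg]
  field_simp
  ring

lemma cos2H (r : ℝ) :
    Real.cos (2 * (2 * Real.arctan (Real.exp (q * r)))) = 1 - 2 / C r ^ 2 := by
  set x := Real.exp (q * r) with hx
  have hx0 : 0 < x := Real.exp_pos _
  have h1 : (0:ℝ) < 1 + x ^ 2 := by positivity
  have key : Real.cos (2 * Real.arctan x) = 2 * (1 / (1 + x ^ 2)) - 1 := by
    rw [Real.cos_two_mul, Real.cos_sq_arctan]
  rw [show (2 : ℝ) * (2 * Real.arctan x) = 2 * (2 * Real.arctan x) from rfl,
    Real.cos_two_mul, key]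
  rw [show C r = (x + x⁻¹) / 2 by rw [hx, ← Real.exp_neg]; exact Real.cosh_eq _]
  field_simp
  ring

lemma C_even (r : ℝ) : C (-r) = C r := by simp [C, mul_neg]
lemma S_odd (r : ℝ) : S (-r) = -S r := by simp [S, mul_neg]
lemma II_odd (r : ℝ) : II (-r) = -II r := by
  have h : ∀ t : ℝ, (-t) * S (-t) / C (-t) = t * S t / C t := by
    intro t; rw [C_even, S_odd]; ring
  have hcn := intervalIntegral.integral_comp_neg (a := (0:ℝ)) (b := r) (fun t => t * S t / C t)
  rw [show -(0:ℝ) = 0 from neg_zero] at hcn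
  calc II (-r) = ∫ x in (0:ℝ)..(-r), x * S x / C x := rfl
    _ = -∫ x in (-r : ℝ)..0, x * S x / C x := by
        rw [intervalIntegral.integral_symm]
    _ = -∫ x in (0:ℝ)..r, (-x) * S (-x) / C (-x) := by rw [hcn]
    _ = -∫ x in (0:ℝ)..r, x * S x / C x := by
        congr 1
        apply intervalIntegral.integral_congr
        intro t _
        exact h t
    _ = -II r := rfl
lemma psi_odd (r : ℝ) : psi (-r) = -psi r := by
  unfold psi v1 v2 A B
  rw [C_even, S_odd, II_odd]
  ring

lemma deriv_psi : deriv psi = psi1 := funext fun r => (hasDerivAt_psi r).deriv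
lemma deriv_psi1 : deriv psi1 = psi2 := funext fun r => (hasDerivAt_psi1 r).deriv


lemma cont_A : Continuous A :=
  (Differentiable.continuous fun r => (hasDerivAt_A r).differentiableAt :)
lemma cont_B : Continuous B :=
  (Differentiable.continuous fun r => (hasDerivAt_B r).differentiableAt :)
lemma cont_dv1 : Continuous dv1 :=
  (Differentiable.continuous fun r => (hasDerivAt_dv1 r).differentiableAt :)
lemma cont_dv2 : Continuous dv2 :=
  (Differentiable.continuous fun r => (hasDerivAt_dv2 r).differentiableAt :)
lemma cont_ddv1 : Continuous ddv1 := by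
  unfold ddv1
  exact (continuous_const.mul ((contC.pow 2).sub (continuous_const.mul (contS.pow 2)))).div
    (contC.pow 3) fun r => pow_ne_zero _ (hC0 r)
lemma cont_ddv2 : Continuous ddv2 := by
  unfold ddv2
  apply Continuous.div_const
  apply Continuous.add
  · apply Continuous.sub
    · exact (continuous_const.mul contS).div (contC.pow 2) fun r => pow_ne_zero _ (hC0 r)
    · exact ((continuous_const.mul continuous_id).mul
        ((contC.pow 2).sub (continuous_const.mul (contS.pow 2)))).div
        (contC.pow 3) fun r => pow_ne_zero _ (hC0 r)
  · exact continuous_const.mul contS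
lemma cont_psi2 : Continuous psi2 := by
  unfold psi2
  apply Continuous.sub
  apply Continuous.sub
  apply Continuous.add
  · exact cont_ddv2.mul cont_A
  · exact cont_dv2.mul ((continuous_const.mul continuous_id).div (contC.pow 2)
      fun r => pow_ne_zero _ (hC0 r))
  · exact cont_ddv1.mul cont_B
  · apply cont_dv1.mul
    apply Continuous.sub
    · exact ((continuous_neg.mul contS).div contC fun r => hC0 r :)
    · exact (continuous_const.mul (continuous_pow 2)).div (contC.pow 2)
        fun r => pow_ne_zero _ (hC0 r)

lemma contDiff_psi : ContDiff ℝ 2 psi := by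
  rw [show ((2 : WithTop ℕ∞)) = (1 + 1 : WithTop ℕ∞) from by norm_num]
  rw [contDiff_succ_iff_deriv]
  refine ⟨fun r => (hasDerivAt_psi r).differentiableAt, by simp, ?_⟩
  rw [deriv_psi]
  rw [show ((1 : WithTop ℕ∞)) = (0 + 1 : WithTop ℕ∞) from by norm_num]
  rw [contDiff_succ_iff_deriv]
  refine ⟨fun r => (hasDerivAt_psi1 r).differentiableAt, by simp, ?_⟩
  rw [deriv_psi1]
  exact contDiff_zero.mpr cont_psi2

lemma II_nonneg {r : ℝ} (hr : 0 ≤ r) : 0 ≤ II r := by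
  apply intervalIntegral.integral_nonneg hr
  intro u hu
  have h0u : 0 ≤ u := hu.1
  have hS : 0 ≤ S u := Real.sinh_nonneg_iff.mpr (mul_nonneg hq0.le h0u)
  exact div_nonneg (mul_nonneg h0u hS) (Real.cosh_pos _).le

lemma II_le {r : ℝ} (hr : 0 ≤ r) : II r ≤ r ^ 2 := by
  have h1 : II r ≤ ∫ t in (0:ℝ)..r, t := by
    apply intervalIntegral.integral_mono_on hr
      (contInteg.intervalIntegrable _ _) (continuous_id.intervalIntegrable _ _)
    intro t ht
    have h0t : 0 ≤ t := ht.1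
    have hCpos : 0 < C t := Real.cosh_pos _
    have hSC : S t ≤ C t := (Real.sinh_lt_cosh _).le
    rw [div_le_iff₀ hCpos]
    simp only [id_eq]
    nlinarith
  have h2 : (∫ t in (0:ℝ)..r, t) = r ^ 2 / 2 := by
    rw [integral_id]; ring
  nlinarith [sq_nonneg r]

lemma A_eq (r : ℝ) : A r = Real.log (1 + Real.exp (-(2 * (q * r))))
    + 2 * (q * r) * Real.exp (-(2 * (q * r))) / (1 + Real.exp (-(2 * (q * r)))) := by
  set s := q * r with hs
  set x := Real.exp (-(2 * s)) with hx
  have hxpos : 0 < x := Real.exp_pos _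
  have hsx : Real.exp (-s) = Real.exp s * x := by
    rw [hx, ← Real.exp_add]; ring_nf
  have hCe : C r = Real.exp s * (1 + x) / 2 := by
    rw [show C r = (Real.exp s + Real.exp (-s)) / 2 from Real.cosh_eq _, hsx]; ring
  have hSe : S r = Real.exp s * (1 - x) / 2 := by
    rw [show S r = (Real.exp s - Real.exp (-s)) / 2 from Real.sinh_eq _, hsx]; ring
  have h1x : (0:ℝ) < 1 + x := by positivity
  unfold A
  rw [← hs, hCe, hSe]
  rw [show 2 * (Real.exp s * (1 + x) / 2) = Real.exp s * (1 + x) by ring]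
  rw [Real.log_mul (Real.exp_ne_zero _) h1x.ne', Real.log_exp]
  have he : Real.exp s ≠ 0 := Real.exp_ne_zero _
  field_simp
  ring

lemma A_nonneg {r : ℝ} (hr : 0 ≤ r) : 0 ≤ A r := by
  rw [A_eq]
  have hs : 0 ≤ q * r := mul_nonneg hq0.le hr
  have hxpos : 0 < Real.exp (-(2 * (q * r))) := Real.exp_pos _
  have h1 : 0 ≤ Real.log (1 + Real.exp (-(2 * (q * r)))) :=
    Real.log_nonneg (by linarith)
  have h2 : 0 ≤ 2 * (q * r) * Real.exp (-(2 * (q * r))) / (1 + Real.exp (-(2 * (q * r)))) :=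
    div_nonneg (by positivity) (by linarith)
  linarith

lemma A_le {r : ℝ} (hr : 0 ≤ r) :
    A r ≤ (1 + 2 * (q * r)) * Real.exp (-(2 * (q * r))) := by
  rw [A_eq]
  set s := q * r with hs
  set x := Real.exp (-(2 * s)) with hx
  have hs0 : 0 ≤ s := mul_nonneg hq0.le hr
  have hxpos : 0 < x := Real.exp_pos _
  have hlog : Real.log (1 + x) ≤ x := by
    have := Real.log_le_sub_one_of_pos (show (0:ℝ) < 1 + x by positivity)
    linarith
  have hdiv : 2 * s * x / (1 + x) ≤ 2 * s * x :=
    div_le_self (by positivity) (by linarith)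
  nlinarith

lemma psi_bound {r : ℝ} (hr : 0 ≤ r) :
    |psi r| ≤ ((1 + 2 * (q * r)) * (q * r + 1) + (q * r) ^ 2) * Real.exp (-(q * r)) := by
  set s := q * r with hs
  have hs0 : 0 ≤ s := mul_nonneg hq0.le hr
  have hCpos : 0 < C r := Real.cosh_pos _
  have hC1 : 1 ≤ C r := Real.one_le_cosh _
  have hS0 : 0 ≤ S r := Real.sinh_nonneg_iff.mpr hs0
  have hSC : S r ≤ C r := (Real.sinh_lt_cosh _).le
  have hexp : 0 < Real.exp s := Real.exp_pos _
  have hexn : 0 < Real.exp (-s) := Real.exp_pos _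
  have hex2 : 0 < Real.exp (-(2 * s)) := Real.exp_pos _
  have hCe : Real.exp s ≤ 2 * C r := by
    rw [show C r = (Real.exp s + Real.exp (-s)) / 2 from Real.cosh_eq _]
    linarith
  have hSe : S r ≤ Real.exp s / 2 := by
    rw [show S r = (Real.exp s - Real.exp (-s)) / 2 from Real.sinh_eq _]
    linarith
  -- exp relations
  have hmul : Real.exp s * Real.exp (-(2 * s)) = Real.exp (-s) := by
    rw [← Real.exp_add]; ring_nf
  have hmul2 : Real.exp s * Real.exp (-s) = 1 := by
    rw [← Real.exp_add]; simp
  have hx21 : Real.exp (-(2 * s)) ≤ Real.exp (-s) := by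
    apply Real.exp_le_exp.mpr; linarith
  -- v2 bounds
  have hv2nn : 0 ≤ v2 r := by
    unfold v2
    have : 0 ≤ s / C r := div_nonneg hs0 hCpos.le
    rw [← hs]; positivity
  have hv2le : v2 r ≤ s + Real.exp s := by
    unfold v2
    rw [← hs]
    have h1 : s / C r ≤ s := div_le_self hs0 hC1
    linarith
  -- B bound
  have hIIa : 0 ≤ II r := II_nonneg hr
  have hIIb : II r ≤ r ^ 2 := II_le hr
  have hr2 : 0 ≤ r ^ 2 * S r / C r := by positivity
  have hr2' : r ^ 2 * S r / C r ≤ r ^ 2 := by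
    rw [div_le_iff₀ hCpos]; nlinarith [sq_nonneg r]
  have hB : |B r| ≤ r ^ 2 := by
    unfold B
    rw [abs_le]
    constructor <;> linarith
  -- v1 bound
  have hv1 : v1 r ≤ 2 * Real.exp (-s) := by
    unfold v1
    rw [div_le_iff₀ hCpos]
    nlinarith
  have hv1nn : 0 ≤ v1 r := by unfold v1; positivity
  -- term bounds
  have hAnn := A_nonneg hr
  have hAle := A_le hr
  rw [← hs] at hAle
  have t1 : v2 r * A r ≤ (1 + 2 * s) * (s + 1) * Real.exp (-s) := by
    have h1 : v2 r * A r ≤ (s + Real.exp s) * ((1 + 2 * s) * Real.exp (-(2 * s))) :=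
      mul_le_mul hv2le hAle hAnn (by positivity)
    nlinarith [mul_le_mul_of_nonneg_left hx21 (mul_nonneg hs0 (by linarith : (0:ℝ) ≤ 1 + 2 * s))]
  have t2 : v1 r * |B r| ≤ s ^ 2 * Real.exp (-s) := by
    have h1 : v1 r * |B r| ≤ (2 * Real.exp (-s)) * r ^ 2 :=
      mul_le_mul hv1 hB (abs_nonneg _) (by positivity)
    have hq : s ^ 2 = 2 * r ^ 2 := by
      rw [hs, mul_pow, hq2]
    nlinarith
  -- combine
  have hpsile : |psi r| ≤ v2 r * A r + v1 r * |B r| := by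
    unfold psi
    have h1 : |v1 r * B r| = v1 r * |B r| := by
      rw [abs_mul, abs_of_nonneg hv1nn]
    calc |v2 r * A r - v1 r * B r| ≤ |v2 r * A r| + |v1 r * B r| := abs_sub _ _
      _ = v2 r * A r + v1 r * |B r| := by
          rw [h1, abs_of_nonneg (mul_nonneg hv2nn hAnn)]
  calc |psi r| ≤ v2 r * A r + v1 r * |B r| := hpsile
    _ ≤ (1 + 2 * s) * (s + 1) * Real.exp (-s) + s ^ 2 * Real.exp (-s) := by linarith
    _ = ((1 + 2 * s) * (s + 1) + s ^ 2) * Real.exp (-s) := by ring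

lemma q_mul_top : Tendsto (fun r : ℝ => q * r) atTop atTop :=
  Tendsto.const_mul_atTop hq0 tendsto_id

lemma g0 : Tendsto (fun s : ℝ => ((1 + 2 * s) * (s + 1) + s ^ 2) * Real.exp (-s))
    atTop (𝓝 0) := by
  have h2 := tendsto_pow_mul_exp_neg_atTop_nhds_zero 2
  have h1 := tendsto_pow_mul_exp_neg_atTop_nhds_zero 1
  have h0 := Real.tendsto_exp_neg_atTop_nhds_zero
  have hsum := (h2.const_mul (3:ℝ)).add ((h1.const_mul (3:ℝ)).add h0)
  simp only [mul_zero, add_zero] at hsum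
  exact hsum.congr fun s => by ring

lemma psi_top : Tendsto psi atTop (𝓝 0) := by
  apply squeeze_zero_norm'
    (a := fun r => ((1 + 2 * (q * r)) * (q * r + 1) + (q * r) ^ 2) * Real.exp (-(q * r)))
  · filter_upwards [eventually_ge_atTop (0:ℝ)] with r hr
    simpa [Real.norm_eq_abs] using psi_bound hr
  · exact g0.comp q_mul_top

lemma psi_bot : Tendsto psi atBot (𝓝 0) := by
  have h1 : Tendsto (fun r => psi (-r)) atBot (𝓝 0) := psi_top.comp tendsto_neg_atBot_atTop
  have h2 : Tendsto (fun r => -psi (-r)) atBot (𝓝 0) := by simpa using h1.neg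
  exact h2.congr fun r => by rw [psi_odd r, neg_neg]

lemma S_top : Tendsto S atTop atTop := by
  have hbase : Tendsto (fun r : ℝ => (Real.exp (q * r) - 1) / 2) atTop atTop := by
    apply Tendsto.atTop_div_const (by norm_num : (0:ℝ) < 2)
    exact tendsto_atTop_add_const_right atTop (-1) (Real.tendsto_exp_atTop.comp q_mul_top)
  apply tendsto_atTop_mono' atTop ?_ hbase
  filter_upwards [eventually_ge_atTop (0:ℝ)] with r hr
  have h1 : Real.exp (-(q * r)) ≤ 1 := by
    rw [Real.exp_le_one_iff]
    have : 0 ≤ q * r := mul_nonneg hq0.le hr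
    linarith
  rw [show S r = (Real.exp (q * r) - Real.exp (-(q * r))) / 2 from Real.sinh_eq _]
  linarith

lemma v2_top : Tendsto v2 atTop atTop := by
  have hS2 : Tendsto (fun r => S r / 2) atTop atTop :=
    S_top.atTop_div_const (by norm_num)
  apply tendsto_atTop_mono' atTop ?_ hS2
  filter_upwards [eventually_ge_atTop (0:ℝ)] with r hr
  have h1 : 0 ≤ q * r / C r := div_nonneg (mul_nonneg hq0.le hr) (Real.cosh_pos _).le
  unfold v2
  linarith

lemma v1_zero : v1 0 = 1 := by simp [v1, C]
lemma v2_zero : v2 0 = 0 := by simp [v2, S, C]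
lemma dv1_zero : dv1 0 = 0 := by simp [dv1, S]
lemma dv2_zero : dv2 0 = q := by
  simp [dv2, S, C]

end SG

open SG in
/-- There exists a unique odd, decaying `C²` solution of the inhomogeneous linearized
equation `ψ'' − 2·cos(2H)·ψ = −2·r·H'` around the Sine-Gordon kink. -/
theorem inhomogeneous_solution_exists_unique (H : ℝ → ℝ)
    (hH : ∀ r, H r = 2 * Real.arctan (Real.exp (Real.sqrt 2 * r))) :
    ∃! ψ : ℝ → ℝ, ContDiff ℝ 2 ψ ∧
      (∀ r : ℝ, ψ (-r) = -ψ r) ∧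
      (∀ r : ℝ, deriv (deriv ψ) r - 2 * Real.cos (2 * H r) * ψ r
          = -2 * r * deriv H r) ∧
      Tendsto ψ atTop (nhds 0) ∧ Tendsto ψ atBot (nhds 0) := by
  have hHeq : H = fun r => 2 * Real.arctan (Real.exp (q * r)) := funext fun r => hH r
  subst hHeq
  have hderivH : ∀ r : ℝ, deriv (fun r => 2 * Real.arctan (Real.exp (q * r))) r = q / C r :=
    fun r => (hasDerivAt_H r).deriv
  refine ⟨psi, ⟨contDiff_psi, psi_odd, ?_, psi_top, psi_bot⟩, ?_⟩
  · intro r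
    rw [deriv_psi, deriv_psi1, hderivH r, cos2H r]
    linear_combination ode r
  · rintro χ ⟨hχ2, hχodd, hχeq, hχtop, hχbot⟩
    -- regularity of χ
    have hχd : Differentiable ℝ χ := hχ2.differentiable (by norm_num)
    have hχ2' : ContDiff ℝ (1 + 1 : WithTop ℕ∞) χ := by
      rw [show (1 + 1 : WithTop ℕ∞) = 2 by norm_num]; exact hχ2
    have hχderiv : Differentiable ℝ (deriv χ) := by
      have h1 := (contDiff_succ_iff_deriv.mp hχ2').2.2
      exact h1.differentiable one_ne_zero
    set w : ℝ → ℝ := fun r => χ r - psi r with hw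
    have hwd : ∀ r, HasDerivAt w (deriv χ r - psi1 r) r := fun r =>
      ((hχd r).hasDerivAt).sub (hasDerivAt_psi r)
    set dw : ℝ → ℝ := fun r => deriv χ r - psi1 r with hdw
    have hdwd : ∀ r, HasDerivAt dw (deriv (deriv χ) r - psi2 r) r := fun r =>
      ((hχderiv r).hasDerivAt).sub (hasDerivAt_psi1 r)
    have key : ∀ r, deriv (deriv χ) r - psi2 r = 2 * (1 - 2 / C r ^ 2) * w r := by
      intro r
      have h1 := hχeq r
      rw [hderivH r, cos2H r] at h1
      have h2 := ode r
      simp only [hw]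
      linear_combination h1 - h2
    -- Wronskian-type constants
    set W1 : ℝ → ℝ := fun r => dw r * v1 r - w r * dv1 r with hW1
    set W2 : ℝ → ℝ := fun r => dw r * v2 r - w r * dv2 r with hW2
    have hW1d : ∀ r, HasDerivAt W1 0 r := by
      intro r
      have := ((hdwd r).mul (hasDerivAt_v1 r)).sub ((hwd r).mul (hasDerivAt_dv1 r))
      refine this.congr_deriv (Eq.symm ?_)
      rw [key r, hom1 r]
      ring
    have hW2d : ∀ r, HasDerivAt W2 0 r := by
      intro r
      have := ((hdwd r).mul (hasDerivAt_v2 r)).sub ((hwd r).mul (hasDerivAt_dv2 r))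
      refine this.congr_deriv (Eq.symm ?_)
      rw [key r, hom2 r]
      ring
    have hW1c : ∀ r, W1 r = W1 0 := fun r =>
      is_const_of_deriv_eq_zero (fun x => (hW1d x).differentiableAt)
        (fun x => (hW1d x).deriv) r 0
    have hW2c : ∀ r, W2 r = W2 0 := fun r =>
      is_const_of_deriv_eq_zero (fun x => (hW2d x).differentiableAt)
        (fun x => (hW2d x).deriv) r 0
    -- values at zero
    have hχ0 : χ 0 = 0 := by have h := hχodd 0; rw [neg_zero] at h; linarith
    have hpsi0 : psi 0 = 0 := by have h := psi_odd 0; rw [neg_zero] at h; linarith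
    have hw0 : w 0 = 0 := by simp [hw, hχ0, hpsi0]
    have hW20 : W2 0 = 0 := by
      simp [hW2, v2_zero, hw0]
    -- representation of w
    have hrep : ∀ r, q * w r = W1 0 * v2 r := by
      intro r
      have e1 := hW1c r
      have e2 := hW2c r
      have e3 := wronsk r
      rw [hW20] at e2
      simp only [hW1, hW2] at e1 e2
      linear_combination (v2 r) * e1 - (v1 r) * e2 - (χ r - psi r) * e3
    -- the coefficient must vanish
    have hwtop : Tendsto w atTop (𝓝 0) := by
      have := hχtop.sub psi_top
      simpa using this
    have hqw : Tendsto (fun r => W1 0 * v2 r) atTop (𝓝 0) := by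
      have h1 : Tendsto (fun r => q * w r) atTop (𝓝 0) := by
        simpa using hwtop.const_mul q
      exact h1.congr fun r => hrep r
    have hk0 : W1 0 = 0 := by
      by_contra hk
      rcases lt_or_gt_of_ne hk with hneg | hpos
      · have := (tendsto_const_mul_atBot_of_neg hneg).mpr v2_top
        exact not_tendsto_nhds_of_tendsto_atBot this 0 hqw
      · have := Tendsto.const_mul_atTop hpos v2_top
        exact not_tendsto_nhds_of_tendsto_atTop this 0 hqw
    funext r
    have h := hrep r
    rw [hk0, zero_mul] at h
    have hw0' : χ r - psi r = 0 := by
      rcases mul_eq_zero.mp h with h' | h'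
      · exact absurd h' hq0.ne'
      · exact h'
    linarith
end
end

section
/- Let a > 0 and let φ : ℝ → ℝ be a C¹ function whose energy is finite: ∫_{−∞}^{∞} ( (1/2)·φ'(r)² + sin²(φ(r)) )·(r²+a²) dr < ∞. Then the limits lim_{r→−∞} φ(r) and lim_{r→+∞} φ(r) exist and each is an integer multiple of π. -/
open Real Filter MeasureTheory

/-- If `cos x > 0` then `x` is within `π/2` of the nearest multiple of `2π`. -/
lemma abs_sub_round_two_pi_lt {x : ℝ} (hx : 0 < Real.cos x) :
    |x - (round (x / (2 * Real.pi)) : ℤ) * (2 * Real.pi)| < Real.pi / 2 := by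
  have hπ := Real.pi_pos
  set k : ℤ := round (x / (2 * Real.pi)) with hk
  have h1 : |x / (2 * Real.pi) - k| ≤ 1 / 2 := abs_sub_round _
  have h2π : (0:ℝ) < 2 * Real.pi := by linarith
  have hx' : x / (2 * Real.pi) * (2 * Real.pi) = x := div_mul_cancel₀ _ (by positivity)
  have h2 : |x - (k : ℝ) * (2 * Real.pi)| ≤ Real.pi := by
    rw [abs_sub_le_iff] at h1 ⊢
    constructor
    · nlinarith [mul_le_mul_of_nonneg_right h1.1 h2π.le]
    · nlinarith [mul_le_mul_of_nonneg_right h1.2 h2π.le]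
  have hcos : Real.cos (x - (k : ℝ) * (2 * Real.pi)) = Real.cos x := by
    rw [← Real.cos_neg, neg_sub, Real.cos_int_mul_two_pi_sub]
  by_contra hcon
  push_neg at hcon
  have h3 : Real.cos |x - (k : ℝ) * (2 * Real.pi)| ≤ 0 :=
    Real.cos_nonpos_of_pi_div_two_le_of_le hcon (by linarith)
  rw [Real.cos_abs, hcos] at h3
  linarith

/-- A continuous function whose cosine tends to `1` at `atTop` tends to a multiple of `π`. -/
lemma tendsto_of_cos_tendsto_one {ψ : ℝ → ℝ} (hc : Continuous ψ)
    (h : Tendsto (fun r => Real.cos (ψ r)) atTop (nhds 1)) :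
    ∃ m : ℤ, Tendsto ψ atTop (nhds (m * Real.pi)) := by
  have hπ := Real.pi_pos
  have hev : ∀ᶠ r in atTop, 0 < Real.cos (ψ r) :=
    h.eventually (eventually_gt_nhds one_pos)
  obtain ⟨R, hR⟩ := eventually_atTop.mp hev
  set k : ℤ := round (ψ R / (2 * Real.pi)) with hk
  set c : ℝ := (k : ℝ) * (2 * Real.pi) with hc'
  have hbase : |ψ R - c| < Real.pi / 2 := abs_sub_round_two_pi_lt (hR R le_rfl)
  have hcosc : ∀ s : ℝ, Real.cos (c + s) = Real.cos s := by
    intro s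
    rw [show c + s = (k : ℝ) * (2 * Real.pi) - (-s) by ring,
      Real.cos_int_mul_two_pi_sub, Real.cos_neg]
  have hall : ∀ r, R ≤ r → |ψ r - c| < Real.pi / 2 := by
    intro r hr
    by_contra hcon
    push_neg at hcon
    have hcont : ContinuousOn (fun t => |ψ t - c|) (Set.Icc R r) :=
      ((hc.sub continuous_const).abs).continuousOn
    have hIVT := intermediate_value_Icc hr hcont
    have hmem : Real.pi / 2 ∈ Set.Icc (|ψ R - c|) (|ψ r - c|) := ⟨hbase.le, hcon⟩
    obtain ⟨t, ht, hft⟩ := hIVT hmem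
    have hct : 0 < Real.cos (ψ t) := hR t ht.1
    have hzero : Real.cos (ψ t) = 0 := by
      rcases (abs_eq (by positivity)).mp hft with h' | h'
      · rw [show ψ t = c + Real.pi / 2 by linarith, hcosc, Real.cos_pi_div_two]
      · rw [show ψ t = c + (-(Real.pi / 2)) by linarith, hcosc, Real.cos_neg,
          Real.cos_pi_div_two]
    linarith
  have heq : ∀ r, R ≤ r → |ψ r - c| = Real.arccos (Real.cos (ψ r)) := by
    intro r hr
    have h1 : Real.cos (ψ r) = Real.cos |ψ r - c| := by
      rw [Real.cos_abs, ← hcosc (ψ r - c)]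
      congr 1
      ring
    rw [h1, Real.arccos_cos (abs_nonneg _) (le_trans (hall r hr).le (by linarith))]
  have htend : Tendsto (fun r => |ψ r - c|) atTop (nhds 0) := by
    have h2 : Tendsto (fun r => Real.arccos (Real.cos (ψ r))) atTop
        (nhds (Real.arccos 1)) := (Real.continuous_arccos.tendsto 1).comp h
    rw [Real.arccos_one] at h2
    exact h2.congr' (eventually_atTop.mpr ⟨R, fun r hr => (heq r hr).symm⟩)
  have hlim : Tendsto ψ atTop (nhds c) := by
    rw [tendsto_iff_dist_tendsto_zero]
    simpa [Real.dist_eq] using htend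
  refine ⟨2 * k, ?_⟩
  have hce : ((2 * k : ℤ) : ℝ) * Real.pi = c := by rw [hc']; push_cast; ring
  rw [hce]
  exact hlim

/-- A continuous function whose cosine tends to `±1` at `atTop` tends to a multiple of `π`. -/
lemma tendsto_of_cos_tendsto {ψ : ℝ → ℝ} (hc : Continuous ψ) {L : ℝ}
    (hL : L = 1 ∨ L = -1) (h : Tendsto (fun r => Real.cos (ψ r)) atTop (nhds L)) :
    ∃ m : ℤ, Tendsto ψ atTop (nhds (m * Real.pi)) := by
  rcases hL with rfl | rfl
  · exact tendsto_of_cos_tendsto_one hc h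
  · have h' : Tendsto (fun r => Real.cos (ψ r + Real.pi)) atTop (nhds 1) := by
      have := h.neg
      simp only [neg_neg] at this
      exact this.congr fun r => (Real.cos_add_pi (ψ r)).symm
    obtain ⟨m, hm⟩ := tendsto_of_cos_tendsto_one (hc.add continuous_const) h'
    refine ⟨m - 1, ?_⟩
    have h2 := hm.sub_const Real.pi
    have h3 : ∀ r, ψ r + Real.pi - Real.pi = ψ r := fun r => by ring
    replace h2 : Tendsto ψ atTop (nhds ((m : ℝ) * Real.pi - Real.pi)) := h2.congr h3
    have h4 : ((m : ℝ)) * Real.pi - Real.pi = ((m - 1 : ℤ) : ℝ) * Real.pi := by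
      push_cast; ring
    rwa [h4] at h2

/-- Limits of `cos ∘ φ` along a "fat" filter must be `±1` when the energy is finite. -/
lemma ends_pm_one {φ : ℝ → ℝ} {a : ℝ} (ha : 0 < a)
    (hE : ∫⁻ r : ℝ, ENNReal.ofReal
        (((1/2) * (deriv φ r) ^ 2 + Real.sin (φ r) ^ 2) * (r ^ 2 + a ^ 2)) < ⊤)
    (hD : Measurable fun r => ENNReal.ofReal
        (((1/2) * (deriv φ r) ^ 2 + Real.sin (φ r) ^ 2) * (r ^ 2 + a ^ 2)))
    {l : Filter ℝ} [l.NeBot] (hl : ∀ s ∈ l, volume s = ⊤) {L : ℝ}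
    (hg : Tendsto (fun r => Real.cos (φ r)) l (nhds L)) :
    L = 1 ∨ L = -1 := by
  have hLle : L ≤ 1 := le_of_tendsto hg (Eventually.of_forall fun r => Real.cos_le_one _)
  have hLge : -1 ≤ L := ge_of_tendsto hg (Eventually.of_forall fun r => Real.neg_one_le_cos _)
  have hL2 : L ^ 2 = 1 := by
    by_contra hne
    have hle1 : L ^ 2 ≤ 1 := by
      nlinarith [mul_nonneg (by linarith : (0:ℝ) ≤ 1 - L) (by linarith : (0:ℝ) ≤ 1 + L)]
    have hlt : 0 < 1 - L ^ 2 := sub_pos.mpr (lt_of_le_of_ne hle1 hne)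
    set ε := (1 - L ^ 2) / 2 with hε
    have hεpos : 0 < ε := by positivity
    have hsin : Tendsto (fun r => Real.sin (φ r) ^ 2) l (nhds (1 - L ^ 2)) := by
      have h2 : Tendsto (fun r => 1 - Real.cos (φ r) ^ 2) l (nhds (1 - L ^ 2)) :=
        tendsto_const_nhds.sub (hg.pow 2)
      refine h2.congr fun r => ?_
      have := Real.sin_sq_add_cos_sq (φ r); linarith
    have hev : ∀ᶠ r in l, ε < Real.sin (φ r) ^ 2 :=
      hsin.eventually (eventually_gt_nhds (by linarith))
    set s := {r : ℝ | ε < Real.sin (φ r) ^ 2} with hs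
    have hvol : volume s = ⊤ := hl s hev
    have hcontr : (⊤ : ENNReal) ≤ ∫⁻ r : ℝ, ENNReal.ofReal
        (((1/2) * (deriv φ r) ^ 2 + Real.sin (φ r) ^ 2) * (r ^ 2 + a ^ 2)) := by
      calc (⊤ : ENNReal) = ∫⁻ _ in s, ENNReal.ofReal (ε * a ^ 2) := by
            rw [setLIntegral_const, hvol,
              ENNReal.mul_top (ENNReal.ofReal_pos.mpr (by positivity)).ne']
        _ ≤ ∫⁻ r in s, ENNReal.ofReal
            (((1/2) * (deriv φ r) ^ 2 + Real.sin (φ r) ^ 2) * (r ^ 2 + a ^ 2)) := by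
            refine setLIntegral_mono hD fun r hr => ENNReal.ofReal_le_ofReal ?_
            have hr' : ε < Real.sin (φ r) ^ 2 := hr
            nlinarith [sq_nonneg (deriv φ r), sq_nonneg r, ha.le]
        _ ≤ _ := setLIntegral_le_lintegral _ _
    exact absurd hE (by rw [top_le_iff.mp hcontr]; simp)
  have hfac : (L - 1) * (L + 1) = 0 := by nlinarith
  rcases mul_eq_zero.mp hfac with h | h
  · left; linarith
  · right; linarith

/-- Finiteness of the wormhole energy quantizes boundary values: a `C¹` function with
finite energy has limits at `±∞`, each an integer multiple of `π`. -/
theorem finite_energy_quantization (a : ℝ) (ha : 0 < a) (φ : ℝ → ℝ)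
    (hφ : ContDiff ℝ 1 φ)
    (hE : ∫⁻ r : ℝ, ENNReal.ofReal
        (((1/2) * (deriv φ r) ^ 2 + Real.sin (φ r) ^ 2) * (r ^ 2 + a ^ 2)) < ⊤) :
    (∃ m : ℤ, Tendsto φ atBot (nhds (m * Real.pi))) ∧
    (∃ k : ℤ, Tendsto φ atTop (nhds (k * Real.pi))) := by
  have hφc : Continuous φ := hφ.continuous
  have hφ' : Continuous (deriv φ) := hφ.continuous_deriv le_rfl
  set D : ℝ → ℝ := fun r =>
    ((1/2) * (deriv φ r) ^ 2 + Real.sin (φ r) ^ 2) * (r ^ 2 + a ^ 2) with hDdef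
  have hDcont : Continuous D := by
    apply Continuous.mul
    · exact (continuous_const.mul (hφ'.pow 2)).add ((Real.continuous_sin.comp hφc).pow 2)
    · exact (continuous_pow 2).add continuous_const
  have hD : Measurable fun r => ENNReal.ofReal (D r) :=
    ENNReal.measurable_ofReal.comp hDcont.measurable
  set g : ℝ → ℝ := fun r => Real.cos (φ r) with hgdef
  set g' : ℝ → ℝ := fun r => -Real.sin (φ r) * deriv φ r with hg'def
  have hgd : ∀ r, HasDerivAt g (g' r) r := fun r =>
    (Real.hasDerivAt_cos (φ r)).comp r ((hφ.differentiable one_ne_zero r).hasDerivAt)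
  have hg'c : Continuous g' := ((Real.continuous_sin.comp hφc).neg).mul hφ'
  have hbound : ∀ r, |g' r| ≤ a⁻¹ ^ 2 * D r := by
    intro r
    have ha2 : 0 < a ^ 2 := by positivity
    have h0 : |g' r| ≤ (1/2) * (deriv φ r) ^ 2 + Real.sin (φ r) ^ 2 := by
      simp only [hg'def]
      rw [abs_le]
      constructor
      · nlinarith [sq_nonneg (deriv φ r + Real.sin (φ r))]
      · nlinarith [sq_nonneg (deriv φ r - Real.sin (φ r))]
    have hE0 : 0 ≤ (1/2) * (deriv φ r) ^ 2 + Real.sin (φ r) ^ 2 := by positivity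
    have key : a ^ 2 * |g' r| ≤ D r := by
      have h2 : a ^ 2 ≤ r ^ 2 + a ^ 2 := by nlinarith [sq_nonneg r]
      calc a ^ 2 * |g' r|
          ≤ a ^ 2 * ((1/2) * (deriv φ r) ^ 2 + Real.sin (φ r) ^ 2) :=
            mul_le_mul_of_nonneg_left h0 ha2.le
        _ ≤ (r ^ 2 + a ^ 2) * ((1/2) * (deriv φ r) ^ 2 + Real.sin (φ r) ^ 2) :=
            mul_le_mul_of_nonneg_right h2 hE0
        _ = D r := by simp only [hDdef]; ring
    calc |g' r| = a⁻¹ ^ 2 * (a ^ 2 * |g' r|) := by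
          field_simp
      _ ≤ a⁻¹ ^ 2 * D r := by
          have : (0:ℝ) ≤ a⁻¹ ^ 2 := by positivity
          exact mul_le_mul_of_nonneg_left key this
  have hint : Integrable g' := by
    refine ⟨hg'c.aestronglyMeasurable, ?_⟩
    rw [hasFiniteIntegral_iff_norm]
    calc ∫⁻ r, ENNReal.ofReal ‖g' r‖
        ≤ ∫⁻ r, ENNReal.ofReal (a⁻¹ ^ 2 * D r) :=
          lintegral_mono fun r => ENNReal.ofReal_le_ofReal
            (by simpa [Real.norm_eq_abs] using hbound r)
      _ = ENNReal.ofReal (a⁻¹ ^ 2) * ∫⁻ r, ENNReal.ofReal (D r) := by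
          simp_rw [ENNReal.ofReal_mul (by positivity : (0:ℝ) ≤ a⁻¹ ^ 2)]
          exact lintegral_const_mul _ hD
      _ < ⊤ := ENNReal.mul_lt_top ENNReal.ofReal_lt_top hE
  have key : ∀ x : ℝ, g x = g 0 + ∫ t in (0:ℝ)..x, g' t := by
    intro x
    have h1 := intervalIntegral.integral_eq_sub_of_hasDerivAt
      (f := g) (f' := g') (a := 0) (b := x) (fun t _ => hgd t) hint.intervalIntegrable
    linarith
  have htop : Tendsto g atTop (nhds (g 0 + ∫ t in Set.Ioi (0:ℝ), g' t)) := by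
    have h1 := intervalIntegral_tendsto_integral_Ioi 0 hint.integrableOn tendsto_id
    exact (tendsto_const_nhds.add h1).congr fun x => (key x).symm
  have hbot : Tendsto g atBot (nhds (g 0 - ∫ t in Set.Iic (0:ℝ), g' t)) := by
    have h1 := intervalIntegral_tendsto_integral_Iic 0 hint.integrableOn tendsto_id
    have h2 : ∀ x : ℝ, g x = g 0 - ∫ t in x..(0:ℝ), g' t := by
      intro x
      rw [intervalIntegral.integral_symm]
      have := key x
      linarith
    exact (tendsto_const_nhds.sub h1).congr fun x => (h2 x).symm
  have hlTop : ∀ s ∈ (atTop : Filter ℝ), volume s = ⊤ := by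
    intro s hs
    obtain ⟨R, hR⟩ := mem_atTop_sets.mp hs
    refine top_le_iff.mp ?_
    calc (⊤ : ENNReal) = volume (Set.Ici R) := Real.volume_Ici.symm
      _ ≤ volume s := measure_mono fun x hx => hR x hx
  have hlBot : ∀ s ∈ (atBot : Filter ℝ), volume s = ⊤ := by
    intro s hs
    obtain ⟨R, hR⟩ := mem_atBot_sets.mp hs
    refine top_le_iff.mp ?_
    calc (⊤ : ENNReal) = volume (Set.Iic R) := Real.volume_Iic.symm
      _ ≤ volume s := measure_mono fun x hx => hR x hx
  constructor
  · -- atBot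
    have hLpm := ends_pm_one ha hE hD hlBot hbot
    set ψ : ℝ → ℝ := fun r => φ (-r) with hψ
    have hψc : Continuous ψ := hφc.comp continuous_neg
    have hψt : Tendsto (fun r => Real.cos (ψ r)) atTop
        (nhds (g 0 - ∫ t in Set.Iic (0:ℝ), g' t)) :=
      hbot.comp tendsto_neg_atTop_atBot
    obtain ⟨m, hm⟩ := tendsto_of_cos_tendsto hψc hLpm hψt
    refine ⟨m, ?_⟩
    have h3 := hm.comp tendsto_neg_atBot_atTop
    refine h3.congr fun r => ?_
    simp [hψ]
  · -- atTop
    have hLpm := ends_pm_one ha hE hD hlTop htop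
    exact tendsto_of_cos_tendsto hφc hLpm htop
end
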